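/- (Correctness of the channel-gain estimator in the noiseless case.) Let N be a positive integer, s ∈ ℂ^N, p ∈ ℝ^N with p_j ≥ 0, g ∈ ℂ, and let a, d ∈ ℂ^N be unit-modulus vectors. For each m define x_m(i) = (1/√N) Σ_{j} U_j(i,m) √(p_j) s_j and y_m = d_m · g · (Σ_i a_i x_m(i)). Fix n ∈ {0,…,N−1} with s_n ≠ 0, and set c = Σ_{m} (Σ_i conj(a_i) conj(U_n(i,m))) · conj(d_m) · y_m (the combiner with unit gain estimate ĝ = 1). Then the estimate ĝ = c / (√N · s_n) satisfies ĝ = g · √(p_n), i.e., the estimator recovers the complex channel gain scaled by √(p_n). -/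

import Mathlib

open Matrix Complex Finset

/-- The normalized `N × N` DFT matrix: `U i j = ω^(i*j) / √N` with `ω = exp(2πi/N)`. -/
noncomputable def dftU (N : ℕ) : Matrix (Fin N) (Fin N) ℂ :=
  fun i j => Complex.exp (2 * Real.pi * Complex.I / (N : ℂ)) ^ (i.val * j.val) / (Real.sqrt N : ℂ)

/-- The `n`-th circulant-permutation DFT (CP-DFT) matrix:
`U_n i j = U i ((j + n) mod N)`, where addition in `Fin N` is modulo `N`. -/
noncomputable def cpdft (N : ℕ) (n : Fin N) : Matrix (Fin N) (Fin N) ℂ :=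
  fun i j => dftU N i (j + n)

lemma fin_sub_dvd_iff {N : ℕ} (i i' : Fin N) :
    (N : ℤ) ∣ (i'.val : ℤ) - (i.val : ℤ) ↔ i = i' := by
  constructor
  · intro h
    have h0 : ((i'.val : ℤ) - (i.val : ℤ)) = 0 := by
      apply Int.eq_zero_of_abs_lt_dvd h
      have h1 := i.isLt
      have h2 := i'.isLt
      rw [abs_lt]
      omega
    have : i'.val = i.val := by omega
    exact (Fin.ext this).symm
  · rintro rfl; simp

lemma sum_zeta_zpow {N : ℕ} (hN : 0 < N) {ζ : ℂ} (hζ : IsPrimitiveRoot ζ N) (k : ℤ) :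
    ∑ m : Fin N, ζ ^ (k * (m.val : ℤ)) = if (N : ℤ) ∣ k then (N : ℂ) else 0 := by
  have h1 : ∀ j : ℕ, ζ ^ (k * (j : ℤ)) = (ζ ^ k) ^ j := by
    intro j; rw [_root_.zpow_mul, zpow_natCast]
  split_ifs with h
  · have hk1 : ζ ^ k = 1 := (hζ.zpow_eq_one_iff_dvd k).mpr h
    simp [h1, hk1]
  · have hk1 : ζ ^ k ≠ 1 := fun hh => h ((hζ.zpow_eq_one_iff_dvd k).mp hh)
    have h2 : ∑ m : Fin N, ζ ^ (k * (m.val : ℤ)) = ∑ j ∈ Finset.range N, (ζ ^ k) ^ j := by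
      rw [← Fin.sum_univ_eq_sum_range (fun j => (ζ ^ k) ^ j) N]
      exact Finset.sum_congr rfl fun m _ => h1 m.val
    rw [h2, geom_sum_eq hk1]
    have hN1 : (ζ ^ k) ^ N = 1 := by
      rw [← zpow_natCast (ζ ^ k) N, ← _root_.zpow_mul, mul_comm, _root_.zpow_mul, zpow_natCast,
        hζ.pow_eq_one]
      simp
    rw [hN1, sub_self, zero_div]

/-- correctness of the channel-gain estimator, noiseless case: with the
unit-gain combiner `c = ∑ m (∑ i, conj (a i) conj (U_n(i,m))) conj (d m) y m` and a pilot
`s n ≠ 0`, the estimate `ĝ = c / (√N · s n)` recovers the channel gain scaled by `√(p n)`: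
`ĝ = g · √(p n)`. -/
theorem channel_gain_estimator_correct (N : ℕ) (hN : 0 < N)
    (s : Fin N → ℂ) (p : Fin N → ℝ) (hp : ∀ j, 0 ≤ p j) (g : ℂ)
    (a d : Fin N → ℂ) (ha : ∀ i, ‖a i‖ = 1) (hd : ∀ m, ‖d m‖ = 1)
    (x : Fin N → Fin N → ℂ)
    (hx : ∀ m i, x m i =
      (1 / (Real.sqrt N : ℂ)) * ∑ j, cpdft N j i m * (Real.sqrt (p j) : ℂ) * s j)
    (y : Fin N → ℂ)
    (hy : ∀ m, y m = d m * g * ∑ i, a i * x m i)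
    (n : Fin N) (hs : s n ≠ 0)
    (c : ℂ)
    (hc : c = ∑ m,
      (∑ i, (starRingEnd ℂ) (a i) * (starRingEnd ℂ) (cpdft N n i m)) *
        (starRingEnd ℂ) (d m) * y m) :
    c / ((Real.sqrt N : ℂ) * s n) = g * (Real.sqrt (p n) : ℂ) := by
  set ζ : ℂ := Complex.exp (2 * Real.pi * Complex.I / (N : ℂ)) with hζdef
  have hζ : IsPrimitiveRoot ζ N := Complex.isPrimitiveRoot_exp N hN.ne'
  have hζN : ζ ^ N = 1 := hζ.pow_eq_one
  have hζ0 : ζ ≠ 0 := hζ.ne_zero hN.ne'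
  have hNR : (0 : ℝ) < N := by exact_mod_cast hN
  have hsqrt0 : Real.sqrt N ≠ 0 := by positivity
  have hsqrtC : (Real.sqrt N : ℂ) ≠ 0 := by exact_mod_cast hsqrt0
  have hNsq : (Real.sqrt N : ℂ) * (Real.sqrt N : ℂ) = (N : ℂ) := by
    rw [← Complex.ofReal_mul, Real.mul_self_sqrt hNR.le]
    norm_cast
  have hNC0 : (N : ℂ) ≠ 0 := by
    rw [← hNsq]; exact mul_ne_zero hsqrtC hsqrtC
  -- conjugate of ζ
  have hcz : (starRingEnd ℂ) ζ = ζ⁻¹ := by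
    rw [hζdef, ← Complex.exp_conj, ← Complex.exp_neg]
    congr 1
    simp [map_div₀, Complex.conj_I, map_ofNat]
    ring
  have hconj_pow : ∀ k : ℕ, (starRingEnd ℂ) (ζ ^ k) = ζ ^ (-(k : ℤ)) := by
    intro k
    rw [map_pow, hcz, inv_pow, ← zpow_natCast ζ k, ← _root_.zpow_neg]
  -- entries of cpdft
  have hB : ∀ (u i m : Fin N),
      cpdft N u i m = ζ ^ (i.val * (m.val + u.val)) / (Real.sqrt N : ℂ) := by
    intro u i m
    show ζ ^ (i.val * ((m + u : Fin N)).val) / (Real.sqrt N : ℂ) = _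
    congr 1
    rw [Fin.val_add]
    rw [pow_eq_pow_mod _ hζN, pow_eq_pow_mod (i.val * (m.val + u.val)) hζN]
    congr 1
    conv_lhs => rw [Nat.mul_mod]
    conv_rhs => rw [Nat.mul_mod]
    rw [Nat.mod_mod_of_dvd _ dvd_rfl]
  -- orthogonality over m
  have hD : ∀ (i i' j : Fin N),
      ∑ m : Fin N, (starRingEnd ℂ) (cpdft N n i m) * cpdft N j i' m
        = if i = i' then ζ ^ ((i'.val : ℤ) * (j.val : ℤ) - (i.val : ℤ) * (n.val : ℤ)) else 0 := by
    intro i i' j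
    have hterm : ∀ m : Fin N, (starRingEnd ℂ) (cpdft N n i m) * cpdft N j i' m
        = ζ ^ ((i'.val : ℤ) * (j.val : ℤ) - (i.val : ℤ) * (n.val : ℤ)) / (N : ℂ)
          * ζ ^ (((i'.val : ℤ) - (i.val : ℤ)) * (m.val : ℤ)) := by
      intro m
      rw [hB n i m, hB j i' m, map_div₀, hconj_pow, Complex.conj_ofReal]
      rw [← zpow_natCast ζ (i'.val * (m.val + j.val))]
      rw [div_mul_div_comm, hNsq, ← zpow_add₀ hζ0]
      rw [div_mul_eq_mul_div, ← zpow_add₀ hζ0]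
      congr 2
      push_cast
      ring
    rw [Finset.sum_congr rfl fun m _ => hterm m, ← Finset.mul_sum]
    have := sum_zeta_zpow hN hζ ((i'.val : ℤ) - (i.val : ℤ))
    rw [this]
    by_cases hii : i = i'
    · subst hii
      rw [if_pos ((fin_sub_dvd_iff i i).mpr rfl), if_pos rfl]
      field_simp
    · rw [if_neg (fun hh => hii ((fin_sub_dvd_iff i i').mp hh)), if_neg hii, mul_zero]
  -- unit modulus facts
  have hd1 : ∀ m, (starRingEnd ℂ) (d m) * d m = 1 := by
    intro m
    rw [mul_comm, Complex.mul_conj, Complex.normSq_eq_norm_sq, hd m]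
    norm_num
  have ha1 : ∀ i, (starRingEnd ℂ) (a i) * a i = 1 := by
    intro i
    rw [mul_comm, Complex.mul_conj, Complex.normSq_eq_norm_sq, ha i]
    norm_num
  -- remove d
  have step1 : ∀ m, (∑ i : Fin N, (starRingEnd ℂ) (a i) * (starRingEnd ℂ) (cpdft N n i m)) *
        (starRingEnd ℂ) (d m) * y m
      = g * ((∑ i : Fin N, (starRingEnd ℂ) (a i) * (starRingEnd ℂ) (cpdft N n i m)) *
          (∑ i' : Fin N, a i' * x m i')) := by
    intro m
    rw [hy m]
    linear_combination ((∑ i : Fin N, (starRingEnd ℂ) (a i) * (starRingEnd ℂ) (cpdft N n i m)) * g *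
      (∑ i' : Fin N, a i' * x m i')) * hd1 m
  -- inner sum over m for fixed i, i'
  have hMsum : ∀ i i' : Fin N,
      (∑ m : Fin N, ((starRingEnd ℂ) (a i) * (starRingEnd ℂ) (cpdft N n i m)) * (a i' * x m i'))
      = if i = i' then ((starRingEnd ℂ) (a i) * a i' * (1 / (Real.sqrt N : ℂ))) *
          ∑ j : Fin N, ((Real.sqrt (p j) : ℂ) * s j *
            ζ ^ ((i'.val : ℤ) * (j.val : ℤ) - (i.val : ℤ) * (n.val : ℤ))) else 0 := by
    intro i i'
    have e1 : ∀ m, ((starRingEnd ℂ) (a i) * (starRingEnd ℂ) (cpdft N n i m)) * (a i' * x m i')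
        = ∑ j : Fin N, ((starRingEnd ℂ) (a i) * a i' * (1 / (Real.sqrt N : ℂ)) *
            (Real.sqrt (p j) : ℂ) * s j) *
            ((starRingEnd ℂ) (cpdft N n i m) * cpdft N j i' m) := by
      intro m
      rw [hx m i', Finset.mul_sum, Finset.mul_sum, Finset.mul_sum]
      exact Finset.sum_congr rfl fun j _ => by ring
    rw [Finset.sum_congr rfl fun m _ => e1 m, Finset.sum_comm]
    rw [Finset.sum_congr rfl fun j _ => (Finset.mul_sum _ _ _).symm]
    rw [Finset.sum_congr rfl fun j _ => by rw [hD i i' j]]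
    by_cases hii : i = i'
    · subst hii
      rw [Finset.mul_sum]
      simp only [eq_self_iff_true, if_true]
      exact Finset.sum_congr rfl fun j _ => by ring
    · simp [hii]
  -- main computation
  have key : (∑ m : Fin N, (∑ i : Fin N, (starRingEnd ℂ) (a i) * (starRingEnd ℂ) (cpdft N n i m)) *
        (starRingEnd ℂ) (d m) * y m)
      = g * ((Real.sqrt (p n) : ℂ) * s n * (Real.sqrt N : ℂ)) := by
    rw [Finset.sum_congr rfl fun m _ => step1 m, ← Finset.mul_sum]
    congr 1
    calc ∑ m : Fin N, (∑ i : Fin N, (starRingEnd ℂ) (a i) * (starRingEnd ℂ) (cpdft N n i m)) *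
            (∑ i' : Fin N, a i' * x m i')
        = ∑ m : Fin N, ∑ i : Fin N, ∑ i' : Fin N, ((starRingEnd ℂ) (a i) * (starRingEnd ℂ) (cpdft N n i m)) *
            (a i' * x m i') := by
          exact Finset.sum_congr rfl fun m _ => Finset.sum_mul_sum _ _ _ _
      _ = ∑ i : Fin N, ∑ i' : Fin N, ∑ m : Fin N, ((starRingEnd ℂ) (a i) * (starRingEnd ℂ) (cpdft N n i m)) *
            (a i' * x m i') := by
          rw [Finset.sum_comm]
          exact Finset.sum_congr rfl fun i _ => Finset.sum_comm
      _ = ∑ i : Fin N, ∑ i' : Fin N, (if i = i' then ((starRingEnd ℂ) (a i) * a i' * (1 / (Real.sqrt N : ℂ))) *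
            ∑ j : Fin N, ((Real.sqrt (p j) : ℂ) * s j *
              ζ ^ ((i'.val : ℤ) * (j.val : ℤ) - (i.val : ℤ) * (n.val : ℤ))) else 0) := by
          exact Finset.sum_congr rfl fun i _ => Finset.sum_congr rfl fun i' _ => hMsum i i'
      _ = ∑ i : Fin N, ((starRingEnd ℂ) (a i) * a i * (1 / (Real.sqrt N : ℂ))) *
            ∑ j : Fin N, ((Real.sqrt (p j) : ℂ) * s j *
              ζ ^ ((i.val : ℤ) * (j.val : ℤ) - (i.val : ℤ) * (n.val : ℤ))) := by
          refine Finset.sum_congr rfl fun i _ => ?_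
          rw [Finset.sum_ite_eq univ i _]
          simp
      _ = (1 / (Real.sqrt N : ℂ)) * ∑ i : Fin N, ∑ j : Fin N, ((Real.sqrt (p j) : ℂ) * s j *
            ζ ^ ((i.val : ℤ) * (j.val : ℤ) - (i.val : ℤ) * (n.val : ℤ))) := by
          rw [Finset.mul_sum]
          exact Finset.sum_congr rfl fun i _ => by rw [ha1 i]; ring
      _ = (1 / (Real.sqrt N : ℂ)) * ∑ j : Fin N, ((Real.sqrt (p j) : ℂ) * s j *
            ∑ i : Fin N, ζ ^ (((j.val : ℤ) - (n.val : ℤ)) * (i.val : ℤ))) := by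
          congr 1
          rw [Finset.sum_comm]
          refine Finset.sum_congr rfl fun j _ => ?_
          rw [Finset.mul_sum]
          refine Finset.sum_congr rfl fun i _ => ?_
          congr 2
          ring
      _ = (1 / (Real.sqrt N : ℂ)) * ∑ j : Fin N, ((Real.sqrt (p j) : ℂ) * s j *
            (if j = n then (N : ℂ) else 0)) := by
          congr 1
          refine Finset.sum_congr rfl fun j _ => ?_
          rw [sum_zeta_zpow hN hζ ((j.val : ℤ) - (n.val : ℤ))]
          congr 1
          by_cases hjn : j = n
          · rw [if_pos ((fin_sub_dvd_iff n j).mpr hjn.symm), if_pos hjn]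
          · rw [if_neg (fun hh => hjn ((fin_sub_dvd_iff n j).mp hh).symm), if_neg hjn]
      _ = (Real.sqrt (p n) : ℂ) * s n * (Real.sqrt N : ℂ) := by
          simp only [mul_ite, mul_zero]
          rw [Finset.sum_ite_eq' univ n fun j => (Real.sqrt (p j) : ℂ) * s j * (N : ℂ)]
          simp only [mem_univ, if_pos]
          rw [← hNsq]
          field_simp
  rw [hc, key]
  field_simp
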